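/- The supremum defining the spherical cap discrepancy is attained: there exist w* ∈ S^{n-1} and t* ∈ [−1,1] such that Δ = |μ_emp(w*,t*) − μ_cap(w*,t*)|. -/

import Mathlib

open scoped Classical BigOperators

noncomputable def muEmp {n N : ℕ} (x : Fin N → (Fin n → ℝ)) (w : Fin n → ℝ) (t : ℝ) : ℝ :=
  (Finset.univ.filter fun i => t ≤ ∑ j, w j * x i j).card / N

noncomputable def muCap (n : ℕ) (t : ℝ) : ℝ :=
  if 0 ≤ t then
    (∫ τ in (0:ℝ)..Real.pi, Real.sin τ ^ (n - 2))⁻¹ * ∫ τ in (0:ℝ)..Real.arccos t, Real.sin τ ^ (n - 2)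
  else
    1 - (∫ τ in (0:ℝ)..Real.pi, Real.sin τ ^ (n - 2))⁻¹ * ∫ τ in (0:ℝ)..Real.arccos (-t), Real.sin τ ^ (n - 2)

noncomputable def locDisc {n N : ℕ} (x : Fin N → (Fin n → ℝ)) (w : Fin n → ℝ) (t : ℝ) : ℝ :=
  |muEmp x w t - muCap n t|

noncomputable def capDisc {n N : ℕ} (x : Fin N → (Fin n → ℝ)) : ℝ :=
  sSup {d : ℝ | ∃ w t, (∑ j, w j ^ 2 = 1) ∧ t ∈ Set.Icc (-1:ℝ) 1 ∧ d = locDisc x w t}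

/-! ### Auxiliary lemmas -/

/-- An upper semicontinuous function attains its maximum on a nonempty compact set. -/
lemma exists_max_of_usc {β : Type*} [TopologicalSpace β] {K : Set β} (hK : IsCompact K)
    (hne : K.Nonempty) {f : β → ℝ} (hf : UpperSemicontinuous f) :
    ∃ z ∈ K, ∀ y ∈ K, f y ≤ f z := by
  by_contra hcon
  push_neg at hcon
  have hcov : K ⊆ ⋃ y : K, f ⁻¹' Set.Iio (f y) := by
    intro z hz
    obtain ⟨y, hyK, hy⟩ := hcon z hz
    exact Set.mem_iUnion.2 ⟨⟨y, hyK⟩, hy⟩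
  obtain ⟨t, ht⟩ := hK.elim_finite_subcover (fun y : K => f ⁻¹' Set.Iio (f y))
    (fun y => hf.isOpen_preimage _) hcov
  obtain ⟨z0, hz0⟩ := hne
  have hz0' := ht hz0
  simp only [Set.mem_iUnion] at hz0'
  obtain ⟨i0, hi0, -⟩ := hz0'
  obtain ⟨j, hjt, hjmax⟩ := t.exists_max_image (fun i => f i.1) ⟨i0, hi0⟩
  have hj := ht j.2
  simp only [Set.mem_iUnion] at hj
  obtain ⟨k, hkt, hk⟩ := hj
  exact absurd hk (not_lt.2 (hjmax k hkt))

lemma sinPowInt (m : ℕ) (a b : ℝ) :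
    IntervalIntegrable (fun τ => Real.sin τ ^ m) MeasureTheory.volume a b :=
  (Real.continuous_sin.pow m).intervalIntegrable a b

lemma c_pos (m : ℕ) : 0 < ∫ τ in (0:ℝ)..Real.pi, Real.sin τ ^ m :=
  intervalIntegral.intervalIntegral_pos_of_pos_on (sinPowInt m 0 Real.pi)
    (fun τ hτ => pow_pos (Real.sin_pos_of_pos_of_lt_pi hτ.1 hτ.2) m) Real.pi_pos

lemma half_integral (m : ℕ) :
    (∫ τ in (0:ℝ)..(Real.pi/2), Real.sin τ ^ m) * 2 = ∫ τ in (0:ℝ)..Real.pi, Real.sin τ ^ m := by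
  have h1 : (∫ τ in (0:ℝ)..(Real.pi/2), Real.sin τ ^ m)
      + ∫ τ in (Real.pi/2)..Real.pi, Real.sin τ ^ m
      = ∫ τ in (0:ℝ)..Real.pi, Real.sin τ ^ m :=
    intervalIntegral.integral_add_adjacent_intervals (sinPowInt _ _ _) (sinPowInt _ _ _)
  have h2 : (∫ τ in (0:ℝ)..(Real.pi/2), Real.sin (Real.pi - τ) ^ m)
      = ∫ τ in (Real.pi - Real.pi/2)..(Real.pi - 0), Real.sin τ ^ m :=
    intervalIntegral.integral_comp_sub_left (fun τ => Real.sin τ ^ m) Real.pi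
  simp only [Real.sin_pi_sub, sub_zero] at h2
  have h3 : Real.pi - Real.pi/2 = Real.pi/2 := by ring
  rw [h3] at h2
  linarith

lemma muCap_half (n : ℕ) :
    (∫ τ in (0:ℝ)..Real.pi, Real.sin τ ^ (n-2))⁻¹
      * ∫ τ in (0:ℝ)..(Real.pi/2), Real.sin τ ^ (n-2) = 1/2 := by
  have hc := c_pos (n-2)
  have hh := half_integral (n-2)
  field_simp
  linarith

lemma muCap_cont (n : ℕ) : Continuous (muCap n) := by
  have hI : Continuous (fun u => ∫ τ in (0:ℝ)..u, Real.sin τ ^ (n-2)) :=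
    intervalIntegral.continuous_primitive (fun a b => sinPowInt (n-2) a b) 0
  have hf : Continuous fun t : ℝ =>
      (∫ τ in (0:ℝ)..Real.pi, Real.sin τ ^ (n - 2))⁻¹
        * ∫ τ in (0:ℝ)..Real.arccos t, Real.sin τ ^ (n - 2) :=
    continuous_const.mul (hI.comp Real.continuous_arccos)
  have hg : Continuous fun t : ℝ =>
      1 - (∫ τ in (0:ℝ)..Real.pi, Real.sin τ ^ (n - 2))⁻¹
        * ∫ τ in (0:ℝ)..Real.arccos (-t), Real.sin τ ^ (n - 2) :=
    continuous_const.sub (continuous_const.mul (hI.comp (Real.continuous_arccos.comp continuous_neg)))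
  exact Continuous.if_le hf hg continuous_const continuous_id (fun t h0 => by
    have ht : t = 0 := h0.symm
    subst ht
    simp only [neg_zero, Real.arccos_zero, muCap_half n]
    norm_num)

lemma muCap_add (n : ℕ) (t : ℝ) : muCap n t + muCap n (-t) = 1 := by
  rcases lt_trichotomy t 0 with h | h | h
  · rw [muCap, muCap, if_neg (not_le.2 h), if_pos (by linarith : (0:ℝ) ≤ -t)]
    ring
  · subst h
    rw [muCap, muCap]
    simp only [neg_zero, le_refl, if_pos, Real.arccos_zero, muCap_half n]
    norm_num
  · rw [muCap, muCap, if_pos h.le, if_neg (by simpa using h : ¬ (0:ℝ) ≤ -t), neg_neg]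
    ring

lemma muEmp_eq_sum {n N : ℕ} (x : Fin N → (Fin n → ℝ)) :
    (fun p : (Fin n → ℝ) × ℝ => muEmp x p.1 p.2)
      = fun p => ∑ i : Fin N,
        Set.indicator {q : (Fin n → ℝ) × ℝ | q.2 ≤ ∑ j, q.1 j * x i j}
          (fun _ => (N:ℝ)⁻¹) p := by
  funext p
  simp only [muEmp, Finset.card_filter]
  rw [Nat.cast_sum, Finset.sum_div]
  refine Finset.sum_congr rfl fun i _ => ?_
  rw [Set.indicator_apply]
  by_cases h : p.2 ≤ ∑ j, p.1 j * x i j <;>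
    simp [h, Set.mem_setOf_eq, one_div]

lemma muEmp_usc {n N : ℕ} (x : Fin N → (Fin n → ℝ)) :
    UpperSemicontinuous (fun p : (Fin n → ℝ) × ℝ => muEmp x p.1 p.2) := by
  rw [muEmp_eq_sum]
  refine upperSemicontinuous_sum fun i _ => ?_
  refine IsClosed.upperSemicontinuous_indicator ?_ (by positivity)
  exact isClosed_le continuous_snd
    (continuous_finset_sum _ fun j _ => ((continuous_apply j).comp continuous_fst).mul continuous_const)

lemma muEmp_add {n N : ℕ} (hN : 0 < N) (x : Fin N → (Fin n → ℝ)) (w : Fin n → ℝ) (t : ℝ) :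
    1 ≤ muEmp x w t + muEmp x (-w) (-t) := by
  have hsum : ∀ i, (∑ j, (-w) j * x i j) = -∑ j, w j * x i j := by
    intro i; rw [← Finset.sum_neg_distrib]; simp [neg_mul]
  have hcard : N ≤ (Finset.univ.filter fun i => t ≤ ∑ j, w j * x i j).card
      + (Finset.univ.filter fun i : Fin N => -t ≤ ∑ j, (-w) j * x i j).card := by
    have hsub : (Finset.univ : Finset (Fin N)) ⊆
        (Finset.univ.filter fun i => t ≤ ∑ j, w j * x i j)
          ∪ (Finset.univ.filter fun i : Fin N => -t ≤ ∑ j, (-w) j * x i j) := by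
      intro i _
      rcases le_total t (∑ j, w j * x i j) with h | h
      · exact Finset.mem_union_left _ (Finset.mem_filter.2 ⟨Finset.mem_univ _, h⟩)
      · refine Finset.mem_union_right _ (Finset.mem_filter.2 ⟨Finset.mem_univ _, ?_⟩)
        rw [hsum i]; linarith
    calc N = (Finset.univ : Finset (Fin N)).card := by simp
    _ ≤ _ := (Finset.card_le_card hsub).trans (Finset.card_union_le _ _)
  rw [muEmp, muEmp, ← add_div, le_div_iff₀ (by exact_mod_cast hN), one_mul]
  exact_mod_cast hcard

theorem statement4 {n N : ℕ} (hn : 2 ≤ n) (hN : 0 < N)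
    (x : Fin N → (Fin n → ℝ)) (hx : ∀ i, ∑ j, x i j ^ 2 = 1) :
    ∃ w : Fin n → ℝ, ∃ t : ℝ, (∑ j, w j ^ 2 = 1) ∧ t ∈ Set.Icc (-1:ℝ) 1 ∧
      capDisc x = |muEmp x w t - muCap n t| := by
  -- the compact domain
  set A : Set (Fin n → ℝ) := {w | ∑ j, w j ^ 2 = 1} with hA
  set K : Set ((Fin n → ℝ) × ℝ) := A ×ˢ Set.Icc (-1:ℝ) 1 with hKdef
  have hAclosed : IsClosed A := by
    have : A = (fun w : Fin n → ℝ => ∑ j, w j ^ 2) ⁻¹' {1} := rfl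
    rw [this]
    exact IsClosed.preimage (continuous_finset_sum _ fun j _ => (continuous_apply j).pow 2)
      isClosed_singleton
  have hAsub : A ⊆ Metric.closedBall 0 1 := by
    intro w hw
    rw [Metric.mem_closedBall, dist_zero_right]
    rw [pi_norm_le_iff_of_nonneg (by norm_num)]
    intro j
    have h1 : w j ^ 2 ≤ 1 := by
      rw [← hw]
      exact Finset.single_le_sum (fun k _ => sq_nonneg (w k)) (Finset.mem_univ j)
    rw [Real.norm_eq_abs]
    nlinarith [abs_nonneg (w j), sq_abs (w j)]
  have hAcomp : IsCompact A :=
    IsCompact.of_isClosed_subset (isCompact_closedBall 0 1) hAclosed hAsub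
  have hKcomp : IsCompact K := hAcomp.prod isCompact_Icc
  -- K is nonempty
  have hne : K.Nonempty := by
    refine ⟨((fun j : Fin n => if j = ⟨0, by omega⟩ then (1:ℝ) else 0), 0), ?_, ?_⟩
    · show (∑ j, (if j = (⟨0, by omega⟩ : Fin n) then (1:ℝ) else 0) ^ 2) = 1
      rw [Finset.sum_eq_single (⟨0, by omega⟩ : Fin n)]
      · simp
      · intro b _ hb; simp [hb]
      · simp
    · exact ⟨by norm_num, by norm_num⟩
  -- the signed discrepancy is upper semicontinuous
  have hD : UpperSemicontinuous (fun p : (Fin n → ℝ) × ℝ => muEmp x p.1 p.2 - muCap n p.2) := by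
    have h1 : UpperSemicontinuous (fun p : (Fin n → ℝ) × ℝ => -(muCap n p.2)) :=
      (((muCap_cont n).comp continuous_snd).neg).upperSemicontinuous
    have := (muEmp_usc x).add h1
    simpa [sub_eq_add_neg] using this
  obtain ⟨z, hzK, hzmax⟩ := exists_max_of_usc hKcomp hne hD
  obtain ⟨hz1, hz2⟩ := hzK
  refine ⟨z.1, z.2, hz1, hz2, ?_⟩
  set M : ℝ := muEmp x z.1 z.2 - muCap n z.2 with hM
  -- every element of the defining set is at most |M|
  have hbound : ∀ d ∈ {d : ℝ | ∃ w t, (∑ j, w j ^ 2 = 1) ∧ t ∈ Set.Icc (-1:ℝ) 1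
      ∧ d = locDisc x w t}, d ≤ |M| := by
    rintro d ⟨w, t, hw, ht, rfl⟩
    have hmem : (w, t) ∈ K := ⟨hw, ht⟩
    have hmem' : (-w, -t) ∈ K := by
      refine ⟨?_, ?_⟩
      · show (∑ j, (-w) j ^ 2) = 1
        simpa [neg_pow] using hw
      · constructor
        · show (-1:ℝ) ≤ -t
          linarith [ht.2]
        · show -t ≤ (1:ℝ)
          linarith [ht.1]
    have h1 : muEmp x w t - muCap n t ≤ M := hzmax (w, t) hmem
    have h2 : muEmp x (-w) (-t) - muCap n (-t) ≤ M := hzmax (-w, -t) hmem'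
    have h3 := muEmp_add hN x w t
    have h4 := muCap_add n t
    have h5 : muCap n t - muEmp x w t ≤ M := by linarith
    rw [locDisc]
    rw [abs_sub_le_iff]
    exact ⟨h1.trans (le_abs_self M), h5.trans (le_abs_self M)⟩
  have hmemS : |M| ∈ {d : ℝ | ∃ w t, (∑ j, w j ^ 2 = 1) ∧ t ∈ Set.Icc (-1:ℝ) 1
      ∧ d = locDisc x w t} := ⟨z.1, z.2, hz1, hz2, rfl⟩
  rw [capDisc]
  exact le_antisymm (csSup_le ⟨|M|, hmemS⟩ hbound) (le_csSup ⟨|M|, hbound⟩ hmemS)
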